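/- If A is a good λα-term (derivable in a context with empty local part) and A is a normal form with respect to σ ∪ {α} (all λα rules except Beta, together with the α rule), then A is a pure lambda-term containing no explicit substitutions. -/

import Mathlib

abbrev Var := ℕ
abbrev Ctx := Finset Var × List Var

/-- `Γ,x` : extend the local part with `x` as innermost (rightmost) variable.
Lists represent local contexts with head = outermost (leftmost). -/
def Ctx.snoc (Γ : Ctx) (x : Var) : Ctx := (Γ.1, Γ.2 ++ [x])

/-- The least partial order on contexts generated by
`(G,L) < (G ∪ {x}, L)` for `x ∉ G` and `(G,L) < (G \ {x}, x::L)`. -/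
inductive CtxLe : Ctx → Ctx → Prop
  | refl (Γ : Ctx) : CtxLe Γ Γ
  | trans {Γ Δ Θ : Ctx} : CtxLe Γ Δ → CtxLe Δ Θ → CtxLe Γ Θ
  | glob (G : Finset Var) (L : List Var) (x : Var) (h : x ∉ G) :
      CtxLe (G, L) (insert x G, L)
  | loc (G : Finset Var) (L : List Var) (x : Var) :
      CtxLe (G, L) (G.erase x, x :: L)

def Compatible (Γ Δ : Ctx) : Prop := ∃ Θ, CtxLe Γ Θ ∧ CtxLe Δ Θ

/-- Auxiliary supremum on contexts whose local lists have head = innermost. -/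
def supAux : Finset Var → List Var → Finset Var → List Var → Option (Finset Var × List Var)
  | G₁, [], G₂, [] => some (G₁ ∪ G₂, [])
  | G₁, x :: l₁, G₂, [] =>
      (supAux G₁ l₁ (G₂.erase x) []).map fun p => (p.1, x :: p.2)
  | G₁, [], G₂, x :: l₂ =>
      (supAux (G₁.erase x) [] G₂ l₂).map fun p => (p.1, x :: p.2)
  | G₁, x :: l₁, G₂, y :: l₂ =>
      if x = y then (supAux G₁ l₁ G₂ l₂).map fun p => (p.1, x :: p.2) else none
  termination_by _ l₁ _ l₂ => l₁.length + l₂.length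

/-- The (partial) supremum `Γ ⊔ Δ` of two contexts. -/
def ctxSup (Γ Δ : Ctx) : Option Ctx :=
  (supAux Γ.1 Γ.2.reverse Δ.1 Δ.2.reverse).map fun p => (p.1, p.2.reverse)

/-- The partial operation `O_{λx}` : `O_{λx}(Γ,x) = Γ`, `O_{λx}(G, nil) = (G \ {x}, nil)`,
undefined otherwise. -/
def Olam (x : Var) (Γ : Ctx) : Option Ctx :=
  match Γ.2.reverse with
  | [] => some (Γ.1.erase x, [])
  | y :: l => if y = x then some (Γ.1, l.reverse) else none

mutual
/-- Terms of the calculus λα. -/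
inductive Tm : Type
  | var : Var → Tm
  | app : Tm → Tm → Tm
  | lam : Var → Tm → Tm
  | sub : Sb → Tm → Tm
/-- Substitutions of the calculus λα: `[B/x]`, `Wx`, `{yx}`, `Sₓ`. -/
inductive Sb : Type
  | push : Tm → Var → Sb
  | weak : Var → Sb
  | ren : Var → Var → Sb
  | lift : Sb → Var → Sb
end

mutual
/-- The typing judgement `Γ ⊢ A` of λα (rules R1–R6). -/
inductive Judg : Ctx → Tm → Prop
  | r1 {G : Finset Var} {x : Var} (h : x ∈ G) : Judg (G, []) (.var x)
  | r2 (Γ : Ctx) (x : Var) : Judg (Γ.snoc x) (.var x)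
  | r3 {Γ : Ctx} {x y : Var} (h : x ≠ y) : Judg Γ (.var x) → Judg (Γ.snoc y) (.var x)
  | r4 {Γ A B} : Judg Γ A → Judg Γ B → Judg Γ (.app A B)
  | r5 {Γ x A} : Judg (Ctx.snoc Γ x) A → Judg Γ (.lam x A)
  | r6 {Γ Δ S A} : SJudg Γ S Δ → Judg Δ A → Judg Γ (.sub S A)
/-- The judgement `Γ ⊢ S ▷ Δ` of λα (rules R7–R10). -/
inductive SJudg : Ctx → Sb → Ctx → Prop
  | r7 {Γ B x} : Judg Γ B → SJudg Γ (.push B x) (Γ.snoc x)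
  | r8 (Γ x) : SJudg (Ctx.snoc Γ x) (.weak x) Γ
  | r9 (Γ y x) : SJudg (Ctx.snoc Γ y) (.ren y x) (Ctx.snoc Γ x)
  | r10 {Γ Δ S} (x) : SJudg Γ S Δ → SJudg (Ctx.snoc Γ x) (.lift S x) (Ctx.snoc Δ x)
end

mutual
/-- Weight of a term, used for the termination of `FV`. -/
def wT : Tm → ℕ
  | .var _ => 1
  | .app a b => wT a + wT b + 1
  | .lam _ a => wT a + 1
  | .sub s a => wS s + wT a
/-- Weight of a substitution, used for the termination of `FV`. -/
def wS : Sb → ℕ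
  | .weak _ => 1
  | .push b _ => wT b + 4
  | .ren _ _ => 4
  | .lift s _ => wS s + 3
end

/-- The partial free-variable function of λα, valued in contexts. -/
def FV : Tm → Option Ctx
  | .var x => some ({x}, [])
  | .app A B => do ctxSup (← FV A) (← FV B)
  | .lam x A => do Olam x (← FV A)
  | .sub (.weak x) A => (FV A).map (fun Γ => Ctx.snoc Γ x)
  | .sub (.push B x) A => FV (.app (.lam x A) B)
  | .sub (.ren y x) A => FV (.sub (.weak y) (.lam x A))
  | .sub (.lift S x) A => FV (.sub (.weak x) (.sub S (.lam x A)))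
  termination_by t => wT t
  decreasing_by all_goals simp [wT, wS] <;> omega

/-- `x ∈ Γ` : membership in the global or local part of a context. -/
def memCtx (x : Var) (Γ : Ctx) : Prop := x ∈ Γ.1 ∨ x ∈ Γ.2

mutual
/-- One-step σ ∪ {α} reduction: all λα rules except Beta, plus the α rule,
closed under compatible contexts. -/
inductive SigStep : Tm → Tm → Prop
  | app {S A B} : SigStep (.sub S (.app A B)) (.app (.sub S A) (.sub S B))
  | lam {S x A} : SigStep (.sub S (.lam x A)) (.lam x (.sub (.lift S x) A))
  | var {B x} : SigStep (.sub (.push B x) (.var x)) B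
  | shift {B x A} : SigStep (.sub (.push B x) (.sub (.weak x) A)) A
  | shift' {B x z} (h : x ≠ z) : SigStep (.sub (.push B x) (.var z)) (.var z)
  | idVar {y x} : SigStep (.sub (.ren y x) (.var x)) (.var y)
  | idShift {y x A} : SigStep (.sub (.ren y x) (.sub (.weak x) A)) (.sub (.weak y) A)
  | idShift' {y x z} (h : x ≠ z) :
      SigStep (.sub (.ren y x) (.var z)) (.sub (.weak y) (.var z))
  | liftVar {S x} : SigStep (.sub (.lift S x) (.var x)) (.var x)
  | liftShift {S x A} :
      SigStep (.sub (.lift S x) (.sub (.weak x) A)) (.sub (.weak x) (.sub S A))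
  | liftShift' {S x z} (h : x ≠ z) :
      SigStep (.sub (.lift S x) (.var z)) (.sub (.weak x) (.sub S (.var z)))
  | w {x z} (h : x ≠ z) : SigStep (.sub (.weak x) (.var z)) (.var z)
  | alpha {x y A Φ} (hFV : FV (.lam x A) = some Φ) (hx : memCtx x Φ)
      (hy : ¬ memCtx y Φ) : SigStep (.lam x A) (.lam y (.sub (.ren y x) A))
  | lamCong {x A A'} : SigStep A A' → SigStep (.lam x A) (.lam x A')
  | appL {A A' B} : SigStep A A' → SigStep (.app A B) (.app A' B)
  | appR {A B B'} : SigStep B B' → SigStep (.app A B) (.app A B')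
  | subL {S S' A} : SSigStep S S' → SigStep (.sub S A) (.sub S' A)
  | subR {S A A'} : SigStep A A' → SigStep (.sub S A) (.sub S A')
/-- One-step σ ∪ {α} reduction inside substitutions. -/
inductive SSigStep : Sb → Sb → Prop
  | push {B B' : Tm} {x} : SigStep B B' → SSigStep (.push B x) (.push B' x)
  | lift {S S' : Sb} {x} : SSigStep S S' → SSigStep (.lift S x) (.lift S' x)
end

/-- A term is pure (a usual λ-term) iff it contains no explicit substitutions. -/
def pureTm : Tm → Bool
  | .var _ => true
  | .app a b => pureTm a && pureTm b
  | .lam _ a => pureTm a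
  | .sub _ _ => false

lemma wS_pos : ∀ S, 1 ≤ wS S := by
  intro S; cases S <;> simp [wS, wT] <;> omega

lemma wT_pos : ∀ A, 1 ≤ wT A := by
  intro A; cases A with
  | sub S B => have := wS_pos S; simp [wT]; omega
  | _ => simp [wT]

lemma supAux_nil_right : ∀ (r₁ : List Var) (G₁ G₂ : Finset Var),
    ∃ G, supAux G₁ r₁ G₂ [] = some (G, r₁) ∧ G₁ ⊆ G := by
  intro r₁
  induction r₁ with
  | nil => intro G₁ G₂; exact ⟨G₁ ∪ G₂, by simp [supAux], Finset.subset_union_left⟩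
  | cons x l ih =>
      intro G₁ G₂
      obtain ⟨G, h, hsub⟩ := ih G₁ (G₂.erase x)
      exact ⟨G, by simp [supAux, h], hsub⟩

lemma supAux_nil_left : ∀ (r₂ : List Var) (G₁ G₂ : Finset Var),
    ∃ G, supAux G₁ [] G₂ r₂ = some (G, r₂) ∧ G₂ ⊆ G := by
  intro r₂
  induction r₂ with
  | nil => intro G₁ G₂; exact ⟨G₁ ∪ G₂, by simp [supAux], Finset.subset_union_right⟩
  | cons x l ih =>
      intro G₁ G₂
      obtain ⟨G, h, hsub⟩ := ih (G₁.erase x) G₂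
      exact ⟨G, by simp [supAux, h], hsub⟩

lemma supAux_prefix_left : ∀ (r₂ r₁ : List Var) (G₁ G₂ : Finset Var), r₂ <+: r₁ →
    ∃ G, supAux G₁ r₁ G₂ r₂ = some (G, r₁) ∧ G₁ ⊆ G := by
  intro r₂
  induction r₂ with
  | nil => intro r₁ G₁ G₂ _; exact supAux_nil_right r₁ G₁ G₂
  | cons x l ih =>
      intro r₁ G₁ G₂ hpre
      obtain ⟨t, ht⟩ := hpre
      subst ht
      obtain ⟨G, h, hsub⟩ := ih (l ++ t) G₁ G₂ ⟨t, rfl⟩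
      exact ⟨G, by simp [supAux, h], hsub⟩

lemma supAux_prefix_right : ∀ (r₁ r₂ : List Var) (G₁ G₂ : Finset Var), r₁ <+: r₂ →
    ∃ G, supAux G₁ r₁ G₂ r₂ = some (G, r₂) ∧ G₂ ⊆ G := by
  intro r₁
  induction r₁ with
  | nil => intro r₂ G₁ G₂ _; exact supAux_nil_left r₂ G₁ G₂
  | cons x l ih =>
      intro r₂ G₁ G₂ hpre
      obtain ⟨t, ht⟩ := hpre
      subst ht
      obtain ⟨G, h, hsub⟩ := ih (l ++ t) G₁ G₂ ⟨t, rfl⟩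
      exact ⟨G, by simp [supAux, h], hsub⟩

lemma main_lemma : ∀ n A Γ, wT A ≤ n → Judg Γ A → (∀ C, ¬ SigStep A C) →
    (pureTm A = true ∧ ∃ G : Finset Var, FV A = some (G, ([] : List Var))) ∨
    (∃ Ψ : Ctx, FV A = some Ψ ∧ (∃ z l, Ψ.2 = z :: l ∧ z ∈ Ψ.1) ∧ Ψ.2 <:+ Γ.2 ∧
      ∀ S B, A = Tm.sub S B → ∃ x, S = Sb.weak x ∧ Ψ.2.getLast? = some x) := by
  intro n
  induction n with
  | zero => intro A Γ h; have := wT_pos A; omega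
  | succ n ih =>
    intro A Γ hw hJ hnf
    cases A with
    | var v => exact Or.inl ⟨by simp [pureTm], {v}, by simp [FV]⟩
    | app A₁ A₂ =>
      cases hJ with
      | r4 h1 h2 =>
        simp only [wT] at hw
        have w1 : wT A₁ ≤ n := by have := wT_pos A₂; omega
        have w2 : wT A₂ ≤ n := by have := wT_pos A₁; omega
        have hnf1 : ∀ C, ¬ SigStep A₁ C := fun C h => hnf _ (SigStep.appL h)
        have hnf2 : ∀ C, ¬ SigStep A₂ C := fun C h => hnf _ (SigStep.appR h)
        rcases ih A₁ Γ w1 h1 hnf1 with ⟨hp1, G₁, hF1⟩ | ⟨Ψ₁, hF1, ⟨z₁, l₁, hl1, hz1⟩, hs1, _⟩ <;>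
          rcases ih A₂ Γ w2 h2 hnf2 with ⟨hp2, G₂, hF2⟩ | ⟨Ψ₂, hF2, ⟨z₂, l₂, hl2, hz2⟩, hs2, _⟩
        · exact Or.inl ⟨by simp [pureTm, hp1, hp2], G₁ ∪ G₂,
            by simp [FV, hF1, hF2, ctxSup, supAux]⟩
        · obtain ⟨G, hG, hsub⟩ := supAux_nil_left Ψ₂.2.reverse G₁ Ψ₂.1
          refine Or.inr ⟨(G, Ψ₂.2), ?_, ⟨z₂, l₂, hl2, hsub hz2⟩, hs2,
            fun S B h => Tm.noConfusion h⟩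
          simp [FV, hF1, hF2, ctxSup, hG]
        · obtain ⟨G, hG, hsub⟩ := supAux_nil_right Ψ₁.2.reverse Ψ₁.1 G₂
          refine Or.inr ⟨(G, Ψ₁.2), ?_, ⟨z₁, l₁, hl1, hsub hz1⟩, hs1,
            fun S B h => Tm.noConfusion h⟩
          simp [FV, hF1, hF2, ctxSup, hG]
        · rcases List.suffix_or_suffix_of_suffix hs1 hs2 with hss | hss
          · obtain ⟨G, hG, hsub⟩ := supAux_prefix_right Ψ₁.2.reverse Ψ₂.2.reverse Ψ₁.1 Ψ₂.1
              (List.reverse_prefix.2 hss)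
            refine Or.inr ⟨(G, Ψ₂.2), ?_, ⟨z₂, l₂, hl2, hsub hz2⟩, hs2,
              fun S B h => Tm.noConfusion h⟩
            simp [FV, hF1, hF2, ctxSup, hG]
          · obtain ⟨G, hG, hsub⟩ := supAux_prefix_left Ψ₂.2.reverse Ψ₁.2.reverse Ψ₁.1 Ψ₂.1
              (List.reverse_prefix.2 hss)
            refine Or.inr ⟨(G, Ψ₁.2), ?_, ⟨z₁, l₁, hl1, hsub hz1⟩, hs1,
              fun S B h => Tm.noConfusion h⟩
            simp [FV, hF1, hF2, ctxSup, hG]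
    | lam x B =>
      cases hJ with
      | r5 hB =>
        simp only [wT] at hw
        have wB : wT B ≤ n := by omega
        have hnfB : ∀ C, ¬ SigStep B C := fun C h => hnf _ (SigStep.lamCong h)
        rcases ih B _ wB hB hnfB with ⟨hp, G, hF⟩ | ⟨Ψ, hF, ⟨z, l, hl, hz⟩, hsuf, _⟩
        · exact Or.inl ⟨by simp [pureTm, hp], G.erase x, by simp [FV, hF, Olam]⟩
        · simp only [Ctx.snoc] at hsuf
          obtain ⟨t, ht⟩ := hsuf
          obtain ⟨m, a, hm0⟩ := (List.eq_nil_or_concat Ψ.2).resolve_left (by simp [hl])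
          have hm : Ψ.2 = m ++ [a] := by simpa [List.concat_eq_append] using hm0
          have ha : a = x := by
            have h2 := congrArg List.getLast? ht
            rw [hm, ← List.append_assoc, List.getLast?_concat, List.getLast?_concat] at h2
            exact Option.some.inj h2
          subst ha
          have hGm : t ++ m = Γ.2 := by
            apply List.append_cancel_right (bs := [a])
            rw [List.append_assoc, ← hm]
            exact ht
          have hOl : Olam a Ψ = some (Ψ.1, m) := by simp [Olam, hm]
          have hFVlam : FV (Tm.lam a B) = some (Ψ.1, m) := by simp [FV, hF, hOl]
          have hcons : z :: l = m ++ [a] := by rw [← hl, hm]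
          cases m with
          | nil =>
            obtain ⟨hz', -⟩ : z = a ∧ l = [] := by simpa using hcons
            subst hz'
            obtain ⟨y, hy⟩ := Infinite.exists_notMem_finset (Ψ.1 ∪ {z} : Finset Var)
            have hy1 : y ∉ Ψ.1 := fun h => hy (Finset.mem_union_left _ h)
            have hstep : SigStep (Tm.lam z B) (Tm.lam y (Tm.sub (Sb.ren y z) B)) := by
              refine SigStep.alpha hFVlam (Or.inl hz) ?_
              rintro (h | h)
              · exact hy1 h
              · simp at h
            exact (hnf _ hstep).elim
          | cons b m' =>
            have hzb : z = b := by injection hcons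
            subst hzb
            exact Or.inr ⟨(Ψ.1, z :: m'), hFVlam, ⟨z, m', rfl, hz⟩, ⟨t, hGm⟩,
              fun S B h => Tm.noConfusion h⟩
    | sub S B =>
      cases hJ with
      | r6 hS hB =>
        rename_i Δ
        cases B with
        | var v =>
          cases S with
          | push C x =>
            by_cases h : x = v
            · subst h; exact (hnf _ SigStep.var).elim
            · exact (hnf _ (SigStep.shift' h)).elim
          | weak x =>
            by_cases h : x = v
            · subst h
              cases hS with
              | r8 Δ =>
                refine Or.inr ⟨(({x} : Finset Var), [x]), by simp [FV, Ctx.snoc],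
                  ⟨x, [], rfl, by simp⟩, ⟨Δ.2, by simp [Ctx.snoc]⟩, ?_⟩
                rintro S' B' ⟨rfl, rfl⟩
                exact ⟨x, rfl, by simp⟩
            · exact (hnf _ (SigStep.w h)).elim
          | ren y x =>
            by_cases h : x = v
            · subst h; exact (hnf _ SigStep.idVar).elim
            · exact (hnf _ (SigStep.idShift' h)).elim
          | lift S₀ x =>
            by_cases h : x = v
            · subst h; exact (hnf _ SigStep.liftVar).elim
            · exact (hnf _ (SigStep.liftShift' h)).elim
        | app B₁ B₂ => exact (hnf _ SigStep.app).elim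
        | lam y B' => exact (hnf _ SigStep.lam).elim
        | sub S' B' =>
          have hnfB : ∀ C, ¬ SigStep (Tm.sub S' B') C := fun C h => hnf _ (SigStep.subR h)
          have wB : wT (Tm.sub S' B') ≤ n := by
            have := wS_pos S; simp only [wT] at hw ⊢; omega
          rcases ih (Tm.sub S' B') Δ wB hB hnfB with ⟨hp, _⟩ |
            ⟨Ψ', hF', ⟨z, l', hl', hz'⟩, hs', hhead⟩
          · simp [pureTm] at hp
          · obtain ⟨w, hS', hlastw⟩ := hhead S' B' rfl
            subst hS'
            have hDlast : Δ.2.getLast? = some w := by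
              obtain ⟨t, ht⟩ := hs'
              rw [← ht, List.getLast?_append, hlastw]; rfl
            cases hS with
            | r7 hC =>
              rename_i C x
              simp only [Ctx.snoc, List.getLast?_concat, Option.some.injEq] at hDlast
              subst hDlast
              exact (hnf _ SigStep.shift).elim
            | r9 =>
              rename_i y x
              simp only [Ctx.snoc, List.getLast?_concat, Option.some.injEq] at hDlast
              subst hDlast
              exact (hnf _ SigStep.idShift).elim
            | r10 x hS0 =>
              simp only [Ctx.snoc, List.getLast?_concat, Option.some.injEq] at hDlast
              subst hDlast
              exact (hnf _ SigStep.liftShift).elim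
            | r8 =>
              rename_i x
              obtain ⟨t, ht⟩ := hs'
              refine Or.inr ⟨(Ψ'.1, Ψ'.2 ++ [x]), by simp [FV, hF', Ctx.snoc],
                ⟨z, l' ++ [x], by rw [hl']; rfl, hz'⟩,
                ⟨t, by simp [Ctx.snoc, ← List.append_assoc, ht]⟩, ?_⟩
              rintro S₀ B₀ ⟨rfl, rfl⟩
              exact ⟨x, rfl, List.getLast?_concat⟩

/-- A good term (derivable in a context with empty local part) that is a
σ ∪ {α}-normal form is a pure λ-term, with no explicit substitutions. -/
theorem good_signf_pure (A : Tm)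
    (hgood : ∃ G : Finset Var, Judg (G, ([] : List Var)) A)
    (hnf : ∀ B, ¬ SigStep A B) : pureTm A = true := by
  obtain ⟨G, hJ⟩ := hgood
  rcases main_lemma (wT A) A (G, []) le_rfl hJ hnf with ⟨hp, _⟩ |
    ⟨Ψ, _, ⟨z, l, hl, _⟩, hsuf, _⟩
  · exact hp
  · obtain ⟨t, ht⟩ := hsuf
    rw [hl] at ht
    simp at ht
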